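/- Under the same setup, taking imaginary parts of inner products yields: (x - λ)·Im⟨f, R_{x+iy}(H_0) f⟩ = Im⟨R_{x-iy}(H_0) f, F*(u - T_{λ+iy}(H_1)u)⟩, where f = R_{λ+iy}(H_1)F*u. -/
import Mathlib


open Complex ContinuousLinearMap
open scoped InnerProductSpace

/-- The resolvent `R_z(A) = (A - z)⁻¹` (as `Ring.inverse`, zero if not invertible). -/
noncomputable def res {H : Type*} [NormedAddCommGroup H] [NormedSpace ℂ H]
    (A : H →L[ℂ] H) (z : ℂ) : H →L[ℂ] H :=
  Ring.inverse (A - z • (1 : H →L[ℂ] H))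

lemma isUnit_sub_smul {H : Type*} [NormedAddCommGroup H] [InnerProductSpace ℂ H]
    [CompleteSpace H] [Nontrivial H] {A : H →L[ℂ] H} (hA : IsSelfAdjoint A) {z : ℂ}
    (hz : z.im ≠ 0) : IsUnit (A - z • (1 : H →L[ℂ] H)) := by
  have hzs : z ∉ spectrum ℂ A := fun h => hz (hA.im_eq_zero_of_mem_spectrum h)
  rw [spectrum.notMem_iff] at hzs
  have := hzs.neg
  rwa [neg_sub, Algebra.algebraMap_eq_smul_one] at this

theorem stmt4 {H K : Type*} [NormedAddCommGroup H] [InnerProductSpace ℂ H] [CompleteSpace H]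
    [NormedAddCommGroup K] [InnerProductSpace ℂ K] [CompleteSpace K]
    (H0 H1 : H →L[ℂ] H) (F : H →L[ℂ] K) (hH0 : IsSelfAdjoint H0)
    (hH1 : H1 = H0 + (adjoint F).comp F)
    (l x y : ℝ) (hy : 0 < y) (u : K)
    (f : H) (hf : f = res H1 ((l : ℂ) + y * I) ((adjoint F) u)) :
    (x - l) * (⟪f, res H0 ((x : ℂ) + y * I) f⟫_ℂ).im
      = (⟪res H0 ((x : ℂ) - y * I) f,
          (adjoint F) (u - (F ∘L res H1 ((l : ℂ) + y * I) ∘L adjoint F) u)⟫_ℂ).im := by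
  rcases subsingleton_or_nontrivial H with hH | hH
  · simp [Subsingleton.elim f 0]
  set z : ℂ := (x : ℂ) + y * I with hz
  set zb : ℂ := (x : ℂ) - y * I with hzb
  set w : ℂ := (l : ℂ) + y * I with hw
  have him : ∀ a : ℝ, ((a : ℂ) + y * I).im ≠ 0 := by
    intro a; simp [Complex.add_im, hy.ne']
  have hH1sa : IsSelfAdjoint H1 := by
    rw [hH1]
    exact hH0.add (by rw [IsSelfAdjoint, ContinuousLinearMap.star_eq_adjoint,
      ContinuousLinearMap.adjoint_comp, adjoint_adjoint])
  have hU1 : IsUnit (H1 - w • (1 : H →L[ℂ] H)) := isUnit_sub_smul hH1sa (him l)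
  have hUz : IsUnit (H0 - z • (1 : H →L[ℂ] H)) := isUnit_sub_smul hH0 (him x)
  have hUzb : IsUnit (H0 - zb • (1 : H →L[ℂ] H)) := by
    refine isUnit_sub_smul hH0 ?_
    simp [hzb, Complex.sub_im, hy.ne']
  -- (H1 - w) f = F* u
  have hfu : (H1 - w • (1 : H →L[ℂ] H)) f = (adjoint F) u := by
    rw [hf]
    have : (H1 - w • (1 : H →L[ℂ] H)) * res H1 w = 1 := Ring.mul_inverse_cancel _ hU1
    calc (H1 - w • (1 : H →L[ℂ] H)) (res H1 w ((adjoint F) u))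
        = ((H1 - w • (1 : H →L[ℂ] H)) * res H1 w) ((adjoint F) u) := rfl
      _ = (adjoint F) u := by rw [this]; rfl
  -- F f = (F ∘L res H1 w ∘L adjoint F) u
  have hFf : (F ∘L res H1 w ∘L adjoint F) u = F f := by rw [hf]; rfl
  -- adjoint of res H0 zb is res H0 z
  have hadj : adjoint (res H0 zb) = res H0 z := by
    rw [← ContinuousLinearMap.star_eq_adjoint, res, res, ← Ring.inverse_star]
    congr 1
    rw [star_sub, star_smul, hH0.star_eq]
    congr 1
    simp [hzb, hz, Complex.ext_iff]
  -- key vector identity: F*u - F*(F f) = (H0 - z) f + (x - l) • f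
  have hvec : (adjoint F) u - (adjoint F) (F f)
      = (H0 - z • (1 : H →L[ℂ] H)) f + ((x : ℂ) - l) • f := by
    rw [← hfu, hH1]
    have : ((adjoint F).comp F) f = (adjoint F) (F f) := rfl
    simp only [ContinuousLinearMap.sub_apply, ContinuousLinearMap.add_apply,
      ContinuousLinearMap.smul_apply, ContinuousLinearMap.one_apply, this]
    have hzw : w = z - ((x : ℂ) - l) := by
      simp [hz, hw, Complex.ext_iff]
    rw [hzw]
    module
  have hadj' : adjoint (res H0 z) = res H0 zb := by rw [← hadj, adjoint_adjoint]
  have hres1 : res H0 z ((H0 - z • (1 : H →L[ℂ] H)) f) = f := by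
    have : res H0 z * (H0 - z • (1 : H →L[ℂ] H)) = 1 := Ring.inverse_mul_cancel _ hUz
    calc res H0 z ((H0 - z • (1 : H →L[ℂ] H)) f)
        = (res H0 z * (H0 - z • (1 : H →L[ℂ] H))) f := rfl
      _ = f := by rw [this]; rfl
  rw [map_sub, hFf, hvec, inner_add_right, inner_smul_right]
  rw [show (⟪res H0 zb f, (H0 - z • (1 : H →L[ℂ] H)) f⟫_ℂ)
      = ⟪f, f⟫_ℂ by
    rw [← hadj', adjoint_inner_left, hres1]]
  rw [show (⟪res H0 zb f, f⟫_ℂ) = ⟪f, res H0 z f⟫_ℂ by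
    rw [← hadj', adjoint_inner_left]]
  have : (⟪f, f⟫_ℂ).im = 0 := by
    rw [← inner_self_ofReal_re]; simp
  rw [Complex.add_im, this, Complex.mul_im]
  simp
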